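/- Let F be a p-adic field, E/F a ramified quadratic extension, π a supercuspidal representation of GL₂(F) with trivial central character and conductor exponent c(π) = 2n+1, and χ a character of E^× trivial on F^× such that the local period functional Hom_{E^×}(π ⊗ χ, ℂ) is nonzero. Let φ_v = π(diag(v,1))φ₀ for the minimal vector φ₀, and suppose the diagonal period {φ_x, φ_x} is nonzero for exactly one class x ∈ (O_F/ϖ^{⌈n/2⌉}O_F)^×. Then for the translated newform φ̃ = π(diag(ϖⁿ,1))φ_new (with φ_new L²-normalized), the period satisfies {φ̃, φ̃} = (1/((q-1)q^{⌈n/2⌉-1}))·{φ_x, φ_x}. -/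

import Mathlib

/-- period of the translated newform when exactly one diagonal
period of the minimal-vector family is nonzero:
{φ̃,φ̃} = (1/((q-1)q^{⌈n/2⌉-1}))·{φ_{x₀},φ_{x₀}}. The newform is the normalized
sum of the translated minimal vectors φ_x, x ∈ (O_F/ϖ^{⌈n/2⌉}O_F)^×, and the
period pairing factors through a single E^×-invariant functional
(multiplicity one). -/
theorem stmt15
    (V : Type*) [AddCommGroup V] [Module ℂ V]
    (q n : ℕ) (hq : 2 ≤ q) (hn : 1 ≤ n)
    (ι : Type*) [Fintype ι]
    (hcard : Fintype.card ι = (q - 1) * q ^ ((n + 1) / 2 - 1))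
    (B : V → V → ℂ)
    (Badd_l : ∀ a b c : V, B (a + b) c = B a c + B b c)
    (Badd_r : ∀ a b c : V, B a (b + c) = B a b + B a c)
    (Bsmul_l : ∀ (r : ℂ) (a b : V), B (r • a) b = r * B a b)
    (Bsmul_r : ∀ (r : ℂ) (a b : V), B a (r • b) = (starRingEnd ℂ) r * B a b)
    -- multiplicity one: the pairing factors through one invariant functional
    (F : V →ₗ[ℂ] ℂ) (C : ℂ) (hC : C ≠ 0)
    (hmult1 : ∀ a b : V, B a b = C * F a * (starRingEnd ℂ) (F b))
    (φ : ι → V) (φnew : V)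
    (hnew : φnew =
      ((Real.sqrt (((q - 1) * q ^ ((n + 1) / 2 - 1) : ℕ) : ℝ) : ℂ))⁻¹ • ∑ x, φ x)
    (x₀ : ι) (h₀ : B (φ x₀) (φ x₀) ≠ 0)
    (huniq : ∀ x : ι, B (φ x) (φ x) ≠ 0 → x = x₀) :
    B φnew φnew = ((((q - 1) * q ^ ((n + 1) / 2 - 1) : ℕ) : ℂ))⁻¹ *
      B (φ x₀) (φ x₀) := by

  set N : ℕ := (q - 1) * q ^ ((n + 1) / 2 - 1) with hN
  have hNpos : 0 < N := by
    apply Nat.mul_pos (by omega)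
    exact pow_pos (by omega) _
  -- F vanishes off x₀
  have hFvan : ∀ x : ι, x ≠ x₀ → F (φ x) = 0 := by
    intro x hx
    by_contra hF
    exact hx (huniq x (by
      rw [hmult1]
      simp [hC, hF]))
  have hFsum : F (∑ x, φ x) = F (φ x₀) := by
    rw [map_sum]
    rw [Finset.sum_eq_single x₀]
    · intro b _ hb; exact hFvan b hb
    · intro h; exact absurd (Finset.mem_univ x₀) h
  have hsqrt : (Real.sqrt (N : ℝ) : ℂ) * (Real.sqrt (N : ℝ) : ℂ) = (N : ℂ) := by
    rw [← Complex.ofReal_mul, Real.mul_self_sqrt (by positivity : (0:ℝ) ≤ (N:ℝ))]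
    norm_cast
  rw [hnew, Bsmul_l, Bsmul_r]
  rw [hmult1 (∑ x, φ x), hmult1 (φ x₀), hFsum]
  have hconj : (starRingEnd ℂ) ((Real.sqrt (N:ℝ) : ℂ))⁻¹ = ((Real.sqrt (N:ℝ) : ℂ))⁻¹ := by
    rw [map_inv₀, Complex.conj_ofReal]
  rw [hconj]
  have key : ((Real.sqrt (N:ℝ) : ℂ))⁻¹ * ((Real.sqrt (N:ℝ) : ℂ))⁻¹ = ((N:ℂ))⁻¹ := by
    rw [← mul_inv, hsqrt]
  rw [← mul_assoc, key]
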